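/- Let (U_n, F_n) be a martingale difference sequence and (V_n) a sequence of random variables having a common distribution with finite mean, such that V_n is independent of F_{n−1} and |U_n| ≤ V_n for all n. Then (1/n) Σ_{k=1}^n U_k → 0 almost surely. -/

import Mathlib

open MeasureTheory Filter ProbabilityTheory
open scoped Topology ENNReal NNReal

/-- Sum over `Icc 1 n` versus sum over `range (n+1)`. -/
lemma sum_Icc_one_eq {a : ℕ → ℝ} (n : ℕ) :
    ∑ k ∈ Finset.Icc 1 n, a k = (∑ k ∈ Finset.range (n+1), a k) - a 0 := by
  induction n with
  | zero => simp
  | succ n ih =>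
      rw [Finset.sum_Icc_succ_top (Nat.le_add_left 1 n), ih,
        Finset.sum_range_succ (f := a) (n := n+1)]
      ring

/-- Cesàro-type averaging over `Icc 1 n`. -/
lemma avg_Icc_tendsto_zero {c : ℕ → ℝ} (h : Tendsto c atTop (𝓝 0)) :
    Tendsto (fun n : ℕ => (n : ℝ)⁻¹ * ∑ k ∈ Finset.Icc 1 n, c k) atTop (𝓝 0) := by
  have hinv : Tendsto (fun n : ℕ => (n : ℝ)⁻¹) atTop (𝓝 0) :=
    tendsto_inv_atTop_nhds_zero_nat
  have h1 : Tendsto (fun n : ℕ => (n : ℝ)⁻¹ * ∑ k ∈ Finset.range n, c k) atTop (𝓝 0) := h.cesaro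
  have h2 : Tendsto (fun n : ℕ => (n : ℝ)⁻¹ * c n) atTop (𝓝 0) := by
    simpa using hinv.mul h
  have h3 : Tendsto (fun n : ℕ => (n : ℝ)⁻¹ * c 0) atTop (𝓝 0) := by
    simpa using hinv.mul_const (c 0)
  have := (h1.add h2).sub h3
  simp only [add_zero, sub_zero, zero_add] at this
  refine this.congr fun n => ?_
  rw [sum_Icc_one_eq, Finset.sum_range_succ]
  ring

/-- Kronecker's lemma, in the form we need. -/
lemma kronecker_aux {a : ℕ → ℝ} {L : ℝ}
    (h : Tendsto (fun n : ℕ => ∑ k ∈ Finset.Icc 1 n, (k : ℝ)⁻¹ * a k) atTop (𝓝 L)) :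
    Tendsto (fun n : ℕ => (n : ℝ)⁻¹ * ∑ k ∈ Finset.Icc 1 n, a k) atTop (𝓝 0) := by
  set b : ℕ → ℝ := fun n => ∑ k ∈ Finset.Icc 1 n, (k : ℝ)⁻¹ * a k with hb
  have key : ∀ n : ℕ, ∑ k ∈ Finset.Icc 1 n, a k
      = (n : ℝ) * b n - ∑ i ∈ Finset.range n, b i := by
    intro n
    induction n with
    | zero => simp [hb]
    | succ n ih =>
        have hbs : b (n+1) = b n + ((n+1 : ℕ) : ℝ)⁻¹ * a (n+1) :=
          Finset.sum_Icc_succ_top (Nat.le_add_left 1 n) _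
        have hne : ((n+1 : ℕ) : ℝ) ≠ 0 := by positivity
        have hcanc : ((n+1 : ℕ) : ℝ) * (((n+1 : ℕ) : ℝ)⁻¹ * a (n+1)) = a (n+1) := by
          rw [← mul_assoc, mul_inv_cancel₀ hne, one_mul]
        rw [Finset.sum_Icc_succ_top (Nat.le_add_left 1 n), ih, hbs, Finset.sum_range_succ]
        push_cast
        push_cast at hcanc
        linarith [hcanc]
  have h2 : Tendsto (fun n : ℕ => b n - (n : ℝ)⁻¹ * ∑ i ∈ Finset.range n, b i)
      atTop (𝓝 0) := by
    have := h.sub h.cesaro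
    simpa using this
  refine h2.congr' ?_
  filter_upwards [eventually_ge_atTop 1] with n hn
  have hne : (n : ℝ) ≠ 0 := by positivity
  rw [key n, mul_sub, ← mul_assoc, inv_mul_cancel₀ hne, one_mul]

/-- **Proposition (SLLN for dominated martingale differences).**
If `(U_n, F_n)` is a martingale difference sequence dominated by random variables `(V_n)`
with a common distribution with finite mean, each `V_n` independent of `F_{n−1}`, then
`(1/n) Σ_{k=1}^n U_k → 0` almost surely. -/
theorem mds_slln
    {Ω : Type} {m0 : MeasurableSpace Ω} {μ : Measure Ω} [IsProbabilityMeasure μ]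
    (F : Filtration ℕ m0)
    (U : ℕ → Ω → ℝ)
    (hUmeas : ∀ n, 1 ≤ n → Measurable[F n] (U n))
    (hUint : ∀ n, 1 ≤ n → Integrable (U n) μ)
    (hmgd : ∀ n, 1 ≤ n → μ[U n | F (n-1)] =ᵐ[μ] 0)
    (V : ℕ → Ω → ℝ) (hVmeas : ∀ n, 1 ≤ n → Measurable (V n))
    (hVident : ∀ n, 1 ≤ n → IdentDistrib (V n) (V 1) μ μ)
    (hVint : Integrable (V 1) μ)
    (hVindep : ∀ n, 1 ≤ n →
      Indep (MeasurableSpace.comap (V n) inferInstance) (F (n-1)) μ)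
    (hdom : ∀ n, 1 ≤ n → ∀ ω, |U n ω| ≤ V n ω) :
    ∀ᵐ ω ∂μ, Tendsto (fun n : ℕ => (n : ℝ)⁻¹ * ∑ k ∈ Finset.Icc 1 n, U k ω)
      atTop (𝓝 0) := by
  classical
  have hVnonneg : ∀ n, 1 ≤ n → ∀ ω, 0 ≤ V n ω :=
    fun n hn ω => (abs_nonneg _).trans (hdom n hn ω)
  have hV1nonneg : 0 ≤ V 1 := fun ω => hVnonneg 1 le_rfl ω
  -- truncated variables
  set T : ℕ → Ω → ℝ := fun n => truncation (U n) n with hT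
  set B : ℕ → Ω → ℝ := fun n => μ[T n | F (n-1)] with hBdef
  set X : ℕ → Ω → ℝ := fun n => T n - B n with hXdef
  set M : ℕ → Ω → ℝ := fun n ω => ∑ k ∈ Finset.Icc 1 n, (k : ℝ)⁻¹ * X k ω with hMdef
  -- basic measurability/integrability facts
  have hTSM : ∀ k, 1 ≤ k → StronglyMeasurable[F k] (T k) := by
    intro k hk
    exact ((measurable_id.indicator measurableSet_Ioc).comp (hUmeas k hk)).stronglyMeasurable
  have hTSM0 : ∀ k, 1 ≤ k → AEStronglyMeasurable (T k) μ := fun k hk =>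
    ((hTSM k hk).mono (F.le k)).aestronglyMeasurable
  have hTbdd : ∀ k (ω : Ω), |T k ω| ≤ (k : ℝ) := by
    intro k ω
    simpa [abs_of_nonneg] using abs_truncation_le_bound (U k) (k : ℝ) ω
  have hTint : ∀ k, 1 ≤ k → Integrable (T k) μ := by
    intro k hk
    exact ((hUmeas k hk).mono (F.le k) le_rfl).aestronglyMeasurable.integrable_truncation
  have hBSM : ∀ k, StronglyMeasurable[F (k-1)] (B k) := fun k => stronglyMeasurable_condExp
  have hBint : ∀ k, Integrable (B k) μ := fun k => integrable_condExp
  have hBbdd : ∀ k, 1 ≤ k → ∀ᵐ ω ∂μ, |B k ω| ≤ (k : ℝ) := by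
    intro k hk
    have hub : μ[T k | F (k-1)] ≤ᵐ[μ] μ[(fun _ => (k:ℝ)) | F (k-1)] :=
      condExp_mono (hTint k hk) (integrable_const _)
        (Filter.Eventually.of_forall fun ω => (abs_le.1 (hTbdd k ω)).2)
    have hlb : μ[(fun _ => -(k:ℝ)) | F (k-1)] ≤ᵐ[μ] μ[T k | F (k-1)] :=
      condExp_mono (integrable_const _) (hTint k hk)
        (Filter.Eventually.of_forall fun ω => (abs_le.1 (hTbdd k ω)).1)
    rw [condExp_const (F.le _)] at hub hlb
    filter_upwards [hub, hlb] with ω h1 h2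
    rw [abs_le]
    exact ⟨h2, h1⟩
  have hXint : ∀ k, 1 ≤ k → Integrable (X k) μ := fun k hk => (hTint k hk).sub (hBint k)
  have hXSM0 : ∀ k, 1 ≤ k → AEStronglyMeasurable (X k) μ := fun k hk =>
    (hTSM0 k hk).sub ((hBSM k).mono (F.le _)).aestronglyMeasurable
  have hXbdd : ∀ k, 1 ≤ k → ∀ᵐ ω ∂μ, |X k ω| ≤ 2 * (k : ℝ) := by
    intro k hk
    filter_upwards [hBbdd k hk] with ω hω
    have h1 := hTbdd k ω
    calc |X k ω| = |T k ω - B k ω| := rfl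
      _ ≤ |T k ω| + |B k ω| := abs_sub _ _
      _ ≤ 2 * (k : ℝ) := by linarith
  -- martingale difference property of X
  have hXcond : ∀ k, 1 ≤ k → μ[X k | F (k-1)] =ᵐ[μ] 0 := by
    intro k hk
    have h1 : μ[X k | F (k-1)] =ᵐ[μ] μ[T k | F (k-1)] - μ[B k | F (k-1)] :=
      condExp_sub (hTint k hk) (hBint k) _
    have h2 : μ[B k | F (k-1)] = B k :=
      condExp_of_stronglyMeasurable (F.le _) (hBSM k) (hBint k)
    refine h1.trans ?_
    rw [h2]
    filter_upwards with ω
    simp [hBdef]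
  -- M is a martingale
  have hadp : StronglyAdapted F M := by
    intro n
    refine Finset.stronglyMeasurable_fun_sum _ fun k hk => ?_
    rw [Finset.mem_Icc] at hk
    exact (((hTSM k hk.1).mono (F.mono hk.2)).sub
      ((hBSM k).mono (F.mono ((Nat.sub_le k 1).trans hk.2)))).const_mul _
  have hMint : ∀ n, Integrable (M n) μ := by
    intro n
    apply integrable_finset_sum
    intro k hk
    rw [Finset.mem_Icc] at hk
    exact ((hXint k hk.1).const_mul _)
  have hmart : Martingale M F μ := by
    refine martingale_nat hadp hMint fun n => ?_
    have hsplit : M (n+1) = M n + fun ω => ((n+1 : ℕ) : ℝ)⁻¹ * X (n+1) ω := by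
      funext ω
      exact Finset.sum_Icc_succ_top (Nat.le_add_left 1 n) _
    have h1 : μ[M (n+1) | F n] =ᵐ[μ]
        μ[M n | F n] + μ[(fun ω => ((n+1 : ℕ) : ℝ)⁻¹ * X (n+1) ω) | F n] := by
      rw [hsplit]
      exact condExp_add (hMint n) ((hXint (n+1) (Nat.le_add_left 1 n)).const_mul _) _
    have h2 : μ[M n | F n] = M n :=
      condExp_of_stronglyMeasurable (F.le n) (hadp n) (hMint n)
    have h3 : μ[(fun ω => ((n+1 : ℕ) : ℝ)⁻¹ * X (n+1) ω) | F n] =ᵐ[μ] 0 := by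
      have hs : μ[((n+1 : ℕ) : ℝ) ⁻¹ • X (n+1) | F n]
          =ᵐ[μ] ((n+1 : ℕ) : ℝ)⁻¹ • μ[X (n+1) | F n] := condExp_smul _ _ _
      have := hXcond (n+1) (Nat.le_add_left 1 n)
      rw [Nat.add_sub_cancel] at this
      refine hs.trans ?_
      filter_upwards [this] with ω hω
      simp [hω]
    refine EventuallyEq.symm (h1.trans ?_)
    rw [h2]
    filter_upwards [h3] with ω hω
    simp only [Pi.add_apply, hω, Pi.zero_apply, add_zero]
  -- integrability of squares
  have hTsq_int : ∀ k, 1 ≤ k → Integrable (fun ω => (T k ω)^2) μ := by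
    intro k hk
    exact (((hUmeas k hk).mono (F.le k) le_rfl).aestronglyMeasurable.memLp_truncation
      (p := 2)).integrable_sq
  have hXsq_int : ∀ k, 1 ≤ k → Integrable (fun ω => (X k ω)^2) μ := by
    intro k hk
    have hsm : AEStronglyMeasurable (fun ω => (X k ω)^2) μ := by
      exact (hXSM0 k hk).pow 2
    refine Integrable.mono' (integrable_const ((2*(k:ℝ))^2)) hsm ?_
    filter_upwards [hXbdd k hk] with ω h
    rw [Real.norm_eq_abs, abs_pow]
    exact pow_le_pow_left₀ (abs_nonneg _) h 2
  -- cross terms vanish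
  have hcross : ∀ k l, 1 ≤ k → k < l → ∫ ω, X k ω * X l ω ∂μ = 0 := by
    intro k l hk hkl
    have hl : 1 ≤ l := hk.trans hkl.le
    have hlk : k ≤ l - 1 := Nat.le_sub_one_of_lt hkl
    have hXkSM : StronglyMeasurable[F (l-1)] (X k) :=
      ((hTSM k hk).mono (F.mono hlk)).sub
        ((hBSM k).mono (F.mono ((Nat.sub_le k 1).trans hlk)))
    have hmul : Integrable (X k * X l) μ := by
      have := (hXint l hl).bdd_mul (hXSM0 k hk)
        (c := 2*(k:ℝ))
        (by filter_upwards [hXbdd k hk] with ω h using by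
              simpa [Real.norm_eq_abs] using h)
      exact this
    have hpull : μ[X k * X l | F (l-1)] =ᵐ[μ] X k * μ[X l | F (l-1)] :=
      condExp_mul_of_stronglyMeasurable_left hXkSM hmul (hXint l hl)
    have h0 : ∫ ω, (X k * X l) ω ∂μ = ∫ ω, (μ[X k * X l | F (l-1)]) ω ∂μ :=
      (integral_condExp (F.le _)).symm
    calc ∫ ω, X k ω * X l ω ∂μ = ∫ ω, (μ[X k * X l | F (l-1)]) ω ∂μ := h0
      _ = ∫ ω, (X k * μ[X l | F (l-1)]) ω ∂μ := integral_congr_ae hpull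
      _ = 0 := by
          rw [← integral_zero Ω ℝ (μ := μ)]
          apply integral_congr_ae
          filter_upwards [hXcond l hl] with ω hω
          simp only [Pi.mul_apply, hω, Pi.zero_apply, mul_zero]
  -- orthogonality: second moment of M n
  have hM2 : ∀ n, ∫ ω, (M n ω)^2 ∂μ
      = ∑ k ∈ Finset.Icc 1 n, ((k:ℝ)⁻¹)^2 * ∫ ω, (X k ω)^2 ∂μ := by
    intro n
    have hpm : ∀ k ∈ Finset.Icc 1 n, ∀ l ∈ Finset.Icc 1 n,
        Integrable (fun ω => ((k:ℝ)⁻¹ * X k ω) * ((l:ℝ)⁻¹ * X l ω)) μ := by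
      intro k hk l hl
      rw [Finset.mem_Icc] at hk hl
      refine Integrable.bdd_mul (((hXint l hl.1).const_mul _))
        ((hXSM0 k hk.1).const_mul _) (c := 2*(k:ℝ)) ?_
      filter_upwards [hXbdd k hk.1] with ω h
      rw [Real.norm_eq_abs, abs_mul]
      calc |(k:ℝ)⁻¹| * |X k ω| ≤ 1 * (2*(k:ℝ)) := by
            refine mul_le_mul ?_ h (abs_nonneg _) zero_le_one
            rw [abs_inv, Nat.abs_cast]
            refine inv_le_one_of_one_le₀ ?_
            exact_mod_cast hk.1
        _ = 2*(k:ℝ) := one_mul _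
    calc ∫ ω, (M n ω)^2 ∂μ
        = ∫ ω, ∑ k ∈ Finset.Icc 1 n, ∑ l ∈ Finset.Icc 1 n,
            ((k:ℝ)⁻¹ * X k ω) * ((l:ℝ)⁻¹ * X l ω) ∂μ := by
          apply integral_congr_ae
          filter_upwards with ω
          rw [sq, hMdef, Finset.sum_mul_sum]
      _ = ∑ k ∈ Finset.Icc 1 n, ∫ ω, ∑ l ∈ Finset.Icc 1 n,
            ((k:ℝ)⁻¹ * X k ω) * ((l:ℝ)⁻¹ * X l ω) ∂μ :=
          integral_finset_sum _ fun k hk =>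
            integrable_finset_sum _ fun l hl => hpm k hk l hl
      _ = ∑ k ∈ Finset.Icc 1 n, ∑ l ∈ Finset.Icc 1 n,
            ∫ ω, ((k:ℝ)⁻¹ * X k ω) * ((l:ℝ)⁻¹ * X l ω) ∂μ :=
          Finset.sum_congr rfl fun k hk =>
            integral_finset_sum _ fun l hl => hpm k hk l hl
      _ = ∑ k ∈ Finset.Icc 1 n, ((k:ℝ)⁻¹)^2 * ∫ ω, (X k ω)^2 ∂μ := by
          refine Finset.sum_congr rfl fun k hk => ?_
          rw [Finset.sum_eq_single_of_mem k hk]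
          · rw [← integral_const_mul]
            apply integral_congr_ae
            filter_upwards with ω
            ring
          · intro l hl hlk
            have hk1 := (Finset.mem_Icc.mp hk).1
            have hl1 := (Finset.mem_Icc.mp hl).1
            have hz : ∫ ω, X k ω * X l ω ∂μ = 0 := by
              rcases lt_or_gt_of_ne hlk with h | h
              · have := hcross l k hl1 h
                rw [← this]
                apply integral_congr_ae
                filter_upwards with ω
                ring
              · exact hcross k l hk1 h
            have hfe : (fun ω => ((k:ℝ)⁻¹ * X k ω) * ((l:ℝ)⁻¹ * X l ω))
                = fun ω => ((k:ℝ)⁻¹ * (l:ℝ)⁻¹) * (X k ω * X l ω) := by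
              funext ω; ring
            rw [hfe, integral_const_mul, hz, mul_zero]
  -- ∫ X² ≤ ∫ T²
  have hXsq_le : ∀ k, 1 ≤ k → ∫ ω, (X k ω)^2 ∂μ ≤ ∫ ω, (T k ω)^2 ∂μ := by
    intro k hk
    have hBT_int : Integrable (B k * T k) μ := by
      have := (hTint k hk).bdd_mul
        (((hBSM k).mono (F.le _)).aestronglyMeasurable) (c := (k:ℝ))
        (by filter_upwards [hBbdd k hk] with ω h; simpa [Real.norm_eq_abs] using h)
      exact this
    have hBB_int : Integrable (fun ω => B k ω * B k ω) μ := by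
      refine Integrable.bdd_mul (hBint k)
        (((hBSM k).mono (F.le _)).aestronglyMeasurable) (c := (k:ℝ)) ?_
      filter_upwards [hBbdd k hk] with ω h
      simpa [Real.norm_eq_abs] using h
    have hBT : ∫ ω, B k ω * T k ω ∂μ = ∫ ω, B k ω * B k ω ∂μ := by
      have hpull : μ[B k * T k | F (k-1)] =ᵐ[μ] B k * μ[T k | F (k-1)] :=
        condExp_mul_of_stronglyMeasurable_left (hBSM k) hBT_int (hTint k hk)
      calc ∫ ω, B k ω * T k ω ∂μ
          = ∫ ω, (μ[B k * T k | F (k-1)]) ω ∂μ := (integral_condExp (F.le _)).symm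
        _ = ∫ ω, (B k * μ[T k | F (k-1)]) ω ∂μ := integral_congr_ae hpull
        _ = ∫ ω, B k ω * B k ω ∂μ := by
            apply integral_congr_ae
            filter_upwards with ω
            simp only [Pi.mul_apply, hBdef]
    have hexp : ∫ ω, (X k ω)^2 ∂μ
        = ∫ ω, (T k ω)^2 ∂μ - ∫ ω, B k ω * B k ω ∂μ := by
      have hBT2 : Integrable (fun ω => 2*(B k ω * T k ω)) μ := by
        simpa [Pi.mul_apply] using hBT_int.const_mul 2
      have e1 : ∫ ω, (X k ω)^2 ∂μ
          = ∫ ω, ((T k ω)^2 - 2*(B k ω * T k ω) + B k ω * B k ω) ∂μ := by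
        apply integral_congr_ae
        filter_upwards with ω
        simp only [hXdef, Pi.sub_apply]
        ring
      have e2 : ∫ ω, ((T k ω)^2 - 2*(B k ω * T k ω) + B k ω * B k ω) ∂μ
          = (∫ ω, ((T k ω)^2 - 2*(B k ω * T k ω)) ∂μ) + ∫ ω, B k ω * B k ω ∂μ :=
        integral_add ((hTsq_int k hk).sub hBT2) hBB_int
      have e3 : ∫ ω, ((T k ω)^2 - 2*(B k ω * T k ω)) ∂μ
          = (∫ ω, (T k ω)^2 ∂μ) - ∫ ω, 2*(B k ω * T k ω) ∂μ :=
        integral_sub (hTsq_int k hk) hBT2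
      have e4 : ∫ ω, 2*(B k ω * T k ω) ∂μ = 2 * ∫ ω, B k ω * T k ω ∂μ :=
        integral_const_mul 2 _
      rw [e1, e2, e3, e4, hBT]
      ring
    have hBBnn : 0 ≤ ∫ ω, B k ω * B k ω ∂μ := integral_nonneg fun ω => mul_self_nonneg _
    rw [hexp]
    linarith
  -- ∫ T² controlled by V
  have hTVsq : ∀ k, 1 ≤ k → ∫ ω, (T k ω)^2 ∂μ
      ≤ (∫ ω, (truncation (V 1) k ω)^2 ∂μ)
        + (k:ℝ)^2 * (μ {ω | V 1 ω ∈ Set.Ioi (k:ℝ)}).toReal := by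
    intro k hk
    have hk1 : (1:ℝ) ≤ (k:ℝ) := by exact_mod_cast hk
    set φ : ℝ → ℝ := fun x => (Set.indicator (Set.Ioc (-(k:ℝ)) (k:ℝ)) id x)^2
      + (k:ℝ)^2 * Set.indicator (Set.Ioi (k:ℝ)) (fun _ => (1:ℝ)) x with hφ
    have hφmeas : Measurable φ :=
      ((measurable_id.indicator measurableSet_Ioc).pow_const 2).add
        ((measurable_const.indicator measurableSet_Ioi).const_mul _)
    have hφbdd : ∀ x, |φ x| ≤ (k:ℝ)^2 + (k:ℝ)^2 := by
      intro x
      have hind1 : (0:ℝ) ≤ Set.indicator (Set.Ioi (k:ℝ)) (fun _ => (1:ℝ)) x :=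
        Set.indicator_apply_nonneg fun _ => zero_le_one
      have hind1' : Set.indicator (Set.Ioi (k:ℝ)) (fun _ => (1:ℝ)) x ≤ 1 := by
        by_cases h : x ∈ Set.Ioi (k:ℝ)
        · rw [Set.indicator_of_mem h]
        · rw [Set.indicator_of_notMem h]; exact zero_le_one
      have h1 : |Set.indicator (Set.Ioc (-(k:ℝ)) (k:ℝ)) id x| ≤ (k:ℝ) := by
        by_cases h : x ∈ Set.Ioc (-(k:ℝ)) (k:ℝ)
        · rw [Set.indicator_of_mem h]
          rw [Set.mem_Ioc] at h
          rw [abs_le]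
          exact ⟨by simpa using h.1.le, h.2⟩
        · rw [Set.indicator_of_notMem h]
          simp only [abs_zero]
          positivity
      have h0 : 0 ≤ φ x := by
        simp only [hφ]
        have : (0:ℝ) ≤ (k:ℝ)^2 * Set.indicator (Set.Ioi (k:ℝ)) (fun _ => (1:ℝ)) x :=
          mul_nonneg (sq_nonneg _) hind1
        nlinarith [sq_nonneg (Set.indicator (Set.Ioc (-(k:ℝ)) (k:ℝ)) id x)]
      rw [abs_of_nonneg h0]
      simp only [hφ]
      have hA : (Set.indicator (Set.Ioc (-(k:ℝ)) (k:ℝ)) id x)^2 ≤ (k:ℝ)^2 := by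
        rw [← sq_abs]
        exact pow_le_pow_left₀ (abs_nonneg _) h1 2
      have hB2 : (k:ℝ)^2 * Set.indicator (Set.Ioi (k:ℝ)) (fun _ => (1:ℝ)) x ≤ (k:ℝ)^2 := by
        nlinarith [sq_nonneg (k:ℝ)]
      linarith
    have hpt : ∀ ω, (T k ω)^2 ≤ φ (V k ω) := by
      intro ω
      by_cases h : V k ω ≤ (k:ℝ)
      · have hIoi : Set.indicator (Set.Ioi (k:ℝ)) (fun _ => (1:ℝ)) (V k ω) = 0 :=
          Set.indicator_of_notMem (by simpa using h) _
        have hIoc : V k ω ∈ Set.Ioc (-(k:ℝ)) (k:ℝ) :=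
          ⟨by nlinarith [hVnonneg k hk ω], h⟩
        have hφv : φ (V k ω) = (V k ω)^2 := by
          simp only [hφ, Set.indicator_of_mem hIoc, hIoi, mul_zero, add_zero, id]
        rw [hφv]
        by_cases hU : U k ω ∈ Set.Ioc (-(k:ℝ)) (k:ℝ)
        · have hTU : T k ω = U k ω := by
            simp only [hT, truncation, Function.comp_apply, Set.indicator_of_mem hU, id]
          rw [hTU]
          have hab := abs_le.1 (hdom k hk ω)
          exact sq_le_sq' hab.1 hab.2
        · have hTz : T k ω = 0 := by
            simp only [hT, truncation, Function.comp_apply, Set.indicator_of_notMem hU]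
          rw [hTz]
          simpa using sq_nonneg (V k ω)
      · push_neg at h
        have hIoi : Set.indicator (Set.Ioi (k:ℝ)) (fun _ => (1:ℝ)) (V k ω) = 1 :=
          Set.indicator_of_mem (Set.mem_Ioi.mpr h) _
        have hIoc : Set.indicator (Set.Ioc (-(k:ℝ)) (k:ℝ)) id (V k ω) = 0 :=
          Set.indicator_of_notMem (by simp only [Set.mem_Ioc, not_and_or, not_le]; exact Or.inr h) _
        have hφv : φ (V k ω) = (k:ℝ)^2 := by
          simp only [hφ, hIoi, hIoc]
          ring
        rw [hφv]
        have hab := abs_le.1 (hTbdd k ω)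
        exact sq_le_sq' hab.1 hab.2
    have hφVint : ∀ j, 1 ≤ j → Integrable (fun ω => φ (V j ω)) μ := by
      intro j hj
      refine Integrable.mono' (integrable_const ((k:ℝ)^2 + (k:ℝ)^2))
        ((hφmeas.comp (hVmeas j hj)).aestronglyMeasurable) ?_
      filter_upwards with ω
      rw [Real.norm_eq_abs]
      exact hφbdd _
    have h1 : ∫ ω, (T k ω)^2 ∂μ ≤ ∫ ω, φ (V k ω) ∂μ :=
      integral_mono (hTsq_int k hk) (hφVint k hk) hpt
    have h2 : ∫ ω, φ (V k ω) ∂μ = ∫ ω, φ (V 1 ω) ∂μ :=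
      ((hVident k hk).comp hφmeas).integral_eq
    have h3 : ∫ ω, φ (V 1 ω) ∂μ = (∫ ω, (truncation (V 1) k ω)^2 ∂μ)
        + (k:ℝ)^2 * (μ {ω | V 1 ω ∈ Set.Ioi (k:ℝ)}).toReal := by
      have hia : Integrable (fun ω => (Set.indicator (Set.Ioc (-(k:ℝ)) (k:ℝ)) id (V 1 ω))^2) μ := by
        have : (fun ω => (Set.indicator (Set.Ioc (-(k:ℝ)) (k:ℝ)) id (V 1 ω))^2)
            = fun ω => (truncation (V 1) (k:ℝ) ω)^2 := by
          funext ω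
          simp [truncation]
        rw [this]
        exact ((hVmeas 1 le_rfl).aestronglyMeasurable.memLp_truncation (p := 2)).integrable_sq
      have hib : Integrable
          (fun ω => (k:ℝ)^2 * Set.indicator (Set.Ioi (k:ℝ)) (fun _ => (1:ℝ)) (V 1 ω)) μ := by
        refine Integrable.const_mul ?_ _
        refine Integrable.mono' (integrable_const 1)
          (((measurable_const.indicator measurableSet_Ioi).comp
            (hVmeas 1 le_rfl)).aestronglyMeasurable) ?_
        filter_upwards with ω
        rw [Real.norm_eq_abs]
        by_cases h : V 1 ω ∈ Set.Ioi (k:ℝ)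
        · rw [Set.indicator_of_mem h]; simp
        · rw [Set.indicator_of_notMem h]; simp
      rw [show (fun ω => φ (V 1 ω)) = fun ω =>
        (Set.indicator (Set.Ioc (-(k:ℝ)) (k:ℝ)) id (V 1 ω))^2
          + (k:ℝ)^2 * Set.indicator (Set.Ioi (k:ℝ)) (fun _ => (1:ℝ)) (V 1 ω) from rfl,
        integral_add hia hib, integral_const_mul]
      have ha : ∫ ω, (Set.indicator (Set.Ioc (-(k:ℝ)) (k:ℝ)) id (V 1 ω))^2 ∂μ
          = ∫ ω, (truncation (V 1) (k:ℝ) ω)^2 ∂μ := by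
        apply integral_congr_ae
        filter_upwards with ω
        simp [truncation]
      have hb : ∫ ω, Set.indicator (Set.Ioi (k:ℝ)) (fun _ => (1:ℝ)) (V 1 ω) ∂μ
          = (μ {ω | V 1 ω ∈ Set.Ioi (k:ℝ)}).toReal := by
        have hcomp : (fun ω => Set.indicator (Set.Ioi (k:ℝ)) (fun _ => (1:ℝ)) (V 1 ω))
            = Set.indicator (V 1 ⁻¹' Set.Ioi (k:ℝ)) (fun _ => (1:ℝ)) := by
          funext ω
          exact (Set.indicator_comp_right (V 1)
            (s := Set.Ioi (k:ℝ)) (g := fun _ => (1:ℝ))).symm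
        rw [hcomp]
        exact integral_indicator_one (μ := μ) ((hVmeas 1 le_rfl) measurableSet_Ioi)
      rw [ha, hb]
    linarith
  -- the uniform second-moment bound
  obtain ⟨C, hC⟩ : ∃ C : ℝ, ∀ n, ∫ ω, (M n ω)^2 ∂μ ≤ C := by
    refine ⟨2 * ∫ ω, V 1 ω ∂μ
      + (∑' j : ℕ, μ {ω | V 1 ω ∈ Set.Ioi (j:ℝ)}).toReal, fun n => ?_⟩
    rw [hM2 n]
    have hstep : ∀ k ∈ Finset.Icc 1 n, ((k:ℝ)⁻¹)^2 * ∫ ω, (X k ω)^2 ∂μ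
        ≤ ((k:ℝ)^2)⁻¹ * ∫ ω, (truncation (V 1) k ω)^2 ∂μ
          + (μ {ω | V 1 ω ∈ Set.Ioi (k:ℝ)}).toReal := by
      intro k hk
      have hk1 := (Finset.mem_Icc.mp hk).1
      have hkpos : (0:ℝ) < (k:ℝ) := by exact_mod_cast hk1
      have hXQ : 0 ≤ ((k:ℝ)⁻¹)^2 := by positivity
      have h := (hXsq_le k hk1).trans (hTVsq k hk1)
      have hinv : ((k:ℝ)⁻¹)^2 * (k:ℝ)^2 = 1 := by
        field_simp
      calc ((k:ℝ)⁻¹)^2 * ∫ ω, (X k ω)^2 ∂μ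
          ≤ ((k:ℝ)⁻¹)^2 * ((∫ ω, (truncation (V 1) k ω)^2 ∂μ)
            + (k:ℝ)^2 * (μ {ω | V 1 ω ∈ Set.Ioi (k:ℝ)}).toReal) :=
            mul_le_mul_of_nonneg_left h hXQ
        _ = ((k:ℝ)^2)⁻¹ * ∫ ω, (truncation (V 1) k ω)^2 ∂μ
            + (((k:ℝ)⁻¹)^2 * (k:ℝ)^2) * (μ {ω | V 1 ω ∈ Set.Ioi (k:ℝ)}).toReal := by
            rw [← inv_pow]
            ring
        _ = ((k:ℝ)^2)⁻¹ * ∫ ω, (truncation (V 1) k ω)^2 ∂μ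
            + (μ {ω | V 1 ω ∈ Set.Ioi (k:ℝ)}).toReal := by
            rw [hinv, one_mul]
    have hS1 : ∑ k ∈ Finset.Icc 1 n, ((k:ℝ)^2)⁻¹ * ∫ ω, (truncation (V 1) k ω)^2 ∂μ
        ≤ 2 * ∫ ω, V 1 ω ∂μ := by
      letI : MeasureSpace Ω := ⟨μ⟩
      have key : ∑ j ∈ Finset.range (n+1), ((j:ℝ)^2)⁻¹ * ∫ ω, (truncation (V 1) j ω)^2 ∂μ
          ≤ 2 * ∫ ω, V 1 ω ∂μ :=
        sum_variance_truncation_le (X := V 1) hVint hV1nonneg (n+1)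
      have hsub : ∑ k ∈ Finset.Icc 1 n, ((k:ℝ)^2)⁻¹ * ∫ ω, (truncation (V 1) k ω)^2 ∂μ
          ≤ ∑ k ∈ Finset.range (n+1), ((k:ℝ)^2)⁻¹ * ∫ ω, (truncation (V 1) k ω)^2 ∂μ := by
        apply Finset.sum_le_sum_of_subset_of_nonneg
        · intro k hk
          rw [Finset.mem_range]
          exact Nat.lt_succ_of_le (Finset.mem_Icc.mp hk).2
        · intro k _ _
          exact mul_nonneg (by positivity) (integral_nonneg fun ω => sq_nonneg _)
      exact hsub.trans key
    have hS2 : ∑ k ∈ Finset.Icc 1 n, (μ {ω | V 1 ω ∈ Set.Ioi (k:ℝ)}).toReal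
        ≤ (∑' j : ℕ, μ {ω | V 1 ω ∈ Set.Ioi (j:ℝ)}).toReal := by
      have hne : (∑' j : ℕ, μ {ω | V 1 ω ∈ Set.Ioi (j:ℝ)}) ≠ ∞ := by
        letI : MeasureSpace Ω := ⟨μ⟩
        exact (tsum_prob_mem_Ioi_lt_top hVint hV1nonneg).ne
      rw [← ENNReal.toReal_sum (fun k _ => measure_ne_top μ _)]
      exact ENNReal.toReal_mono hne (ENNReal.sum_le_tsum _)
    calc ∑ k ∈ Finset.Icc 1 n, ((k:ℝ)⁻¹)^2 * ∫ ω, (X k ω)^2 ∂μ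
        ≤ ∑ k ∈ Finset.Icc 1 n, (((k:ℝ)^2)⁻¹ * ∫ ω, (truncation (V 1) k ω)^2 ∂μ
          + (μ {ω | V 1 ω ∈ Set.Ioi (k:ℝ)}).toReal) := Finset.sum_le_sum hstep
      _ = (∑ k ∈ Finset.Icc 1 n, ((k:ℝ)^2)⁻¹ * ∫ ω, (truncation (V 1) k ω)^2 ∂μ)
          + ∑ k ∈ Finset.Icc 1 n, (μ {ω | V 1 ω ∈ Set.Ioi (k:ℝ)}).toReal :=
          Finset.sum_add_distrib
      _ ≤ 2 * ∫ ω, V 1 ω ∂μ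
          + (∑' j : ℕ, μ {ω | V 1 ω ∈ Set.Ioi (j:ℝ)}).toReal := add_le_add hS1 hS2
  -- L¹ bound and a.e. convergence of M
  have hbdd : ∀ n, eLpNorm (M n) 1 μ ≤ ((1 + C).toNNReal : ℝ≥0∞) := by
    intro n
    have hMbd : ∀ᵐ ω ∂μ, |M n ω| ≤ ∑ k ∈ Finset.Icc 1 n, (2:ℝ) := by
      have hall : ∀ᵐ ω ∂μ, ∀ k ∈ Finset.Icc 1 n, |X k ω| ≤ 2*(k:ℝ) := by
        rw [Filter.eventually_all_finset]
        intro k hk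
        exact hXbdd k (Finset.mem_Icc.mp hk).1
      filter_upwards [hall] with ω hω
      calc |M n ω| ≤ ∑ k ∈ Finset.Icc 1 n, |(k:ℝ)⁻¹ * X k ω| :=
            Finset.abs_sum_le_sum_abs _ _
        _ ≤ ∑ k ∈ Finset.Icc 1 n, (2:ℝ) := by
            refine Finset.sum_le_sum fun k hk => ?_
            have hk1 := (Finset.mem_Icc.mp hk).1
            have hkpos : (0:ℝ) < (k:ℝ) := by exact_mod_cast hk1
            rw [abs_mul, abs_inv, Nat.abs_cast]
            calc (k:ℝ)⁻¹ * |X k ω| ≤ (k:ℝ)⁻¹ * (2*(k:ℝ)) := by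
                  refine mul_le_mul_of_nonneg_left (hω k hk) (by positivity)
              _ = 2 * ((k:ℝ)⁻¹ * (k:ℝ)) := by ring
              _ = 2 := by rw [inv_mul_cancel₀ hkpos.ne', mul_one]
    set D : ℝ := ∑ k ∈ Finset.Icc 1 n, (2:ℝ) with hD
    have hM2int : Integrable (fun ω => (M n ω)^2) μ := by
      have hsm : AEStronglyMeasurable (fun ω => (M n ω)^2) μ := by
        exact (hMint n).aestronglyMeasurable.pow 2
      refine Integrable.mono' (integrable_const (D^2)) hsm ?_
      filter_upwards [hMbd] with ω h
      rw [Real.norm_eq_abs, abs_pow]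
      exact pow_le_pow_left₀ (abs_nonneg _) h 2
    have hint_le : ∫ ω, |M n ω| ∂μ ≤ 1 + C := by
      have h1 : ∫ ω, |M n ω| ∂μ ≤ ∫ ω, (1 + (M n ω)^2) ∂μ := by
        refine integral_mono (hMint n).abs ((integrable_const 1).add hM2int)
          fun ω => ?_
        nlinarith [sq_nonneg (|M n ω| - 1), sq_abs (M n ω)]
      rw [integral_add (integrable_const 1) hM2int, integral_const] at h1
      simp only [measure_univ, probReal_univ, ENNReal.toReal_one, smul_eq_mul, one_mul, mul_one] at h1
      linarith [hC n]
    calc eLpNorm (M n) 1 μ = ENNReal.ofReal (∫ ω, ‖M n ω‖ ∂μ) := by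
          rw [eLpNorm_one_eq_lintegral_enorm,
            ← ofReal_integral_norm_eq_lintegral_enorm (hMint n)]
      _ ≤ ENNReal.ofReal (1 + C) := ENNReal.ofReal_le_ofReal
          (by simpa [Real.norm_eq_abs] using hint_le)
      _ = ((1 + C).toNNReal : ℝ≥0∞) := rfl
  have hconv : ∀ᵐ ω ∂μ, ∃ c, Tendsto (fun n => M n ω) atTop (𝓝 c) :=
    hmart.submartingale.exists_ae_tendsto_of_bdd hbdd
  -- part 1 : Kronecker
  have part1 : ∀ᵐ ω ∂μ,
      Tendsto (fun n : ℕ => (n : ℝ)⁻¹ * ∑ k ∈ Finset.Icc 1 n, X k ω) atTop (𝓝 0) := by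
    filter_upwards [hconv] with ω ⟨c, hc⟩
    exact kronecker_aux (a := fun k => X k ω) hc
  -- part 2 : conditional expectations average to zero
  have part2 : ∀ᵐ ω ∂μ,
      Tendsto (fun n : ℕ => (n : ℝ)⁻¹ * ∑ k ∈ Finset.Icc 1 n, B k ω) atTop (𝓝 0) := by
    set c : ℕ → ℝ := fun k => ∫ ω, Set.indicator (Set.Ici (k:ℝ)) id (V 1 ω) ∂μ with hcdef
    have hgmeas : ∀ k : ℕ, Measurable (Set.indicator (Set.Ici (k:ℝ)) (id : ℝ → ℝ)) :=
      fun k => measurable_id.indicator measurableSet_Ici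
    have hindnonneg : ∀ (k : ℕ) (x : ℝ), 0 ≤ x → 0 ≤ Set.indicator (Set.Ici (k:ℝ)) id x := by
      intro k x hx
      exact Set.indicator_apply_nonneg fun _ => hx
    have hBle : ∀ k, 1 ≤ k → ∀ᵐ ω ∂μ, |B k ω| ≤ c k := by
      intro k hk
      set W : Ω → ℝ := fun ω => Set.indicator (Set.Ici (k:ℝ)) id (V k ω) with hWdef
      have hVkint : Integrable (V k) μ := (hVident k hk).integrable_iff.mpr hVint
      have hWmeas : Measurable (W) := (hgmeas k).comp (hVmeas k hk)
      have hWnonneg : ∀ ω, 0 ≤ W ω := fun ω => hindnonneg k _ (hVnonneg k hk ω)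
      have hWint : Integrable W μ := by
        refine Integrable.mono' hVkint hWmeas.aestronglyMeasurable
          (Filter.Eventually.of_forall fun ω => ?_)
        rw [Real.norm_eq_abs, abs_of_nonneg (hWnonneg ω)]
        show (Set.Ici (k:ℝ)).indicator id (V k ω) ≤ V k ω
        by_cases h : V k ω ∈ Set.Ici (k:ℝ)
        · rw [Set.indicator_of_mem h]; rfl
        · rw [Set.indicator_of_notMem h]; exact hVnonneg k hk ω
      have habs : ∀ ω, |T k ω - U k ω| ≤ W ω := by
        intro ω
        by_cases hmem : U k ω ∈ Set.Ioc (-(k:ℝ)) (k:ℝ)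
        · have hTU : T k ω = U k ω := by
            simp only [hT, truncation, Function.comp_apply, Set.indicator_of_mem hmem, id]
          rw [hTU, sub_self, abs_zero]
          exact hWnonneg ω
        · have h1 : (k:ℝ) ≤ |U k ω| := by
            rw [Set.mem_Ioc, not_and_or] at hmem
            rcases hmem with h | h
            · push_neg at h
              calc (k:ℝ) ≤ -U k ω := by linarith
                _ ≤ |U k ω| := neg_le_abs _
            · push_neg at h
              exact h.le.trans (le_abs_self _)
          have h2 : (k:ℝ) ≤ V k ω := h1.trans (hdom k hk ω)
          have hTz : T k ω = 0 := by
            simp only [hT, truncation, Function.comp_apply, Set.indicator_of_notMem hmem]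
          rw [hTz, zero_sub, abs_neg]
          have hWV : W ω = V k ω := by
            show (Set.Ici (k:ℝ)).indicator id (V k ω) = V k ω
            rw [Set.indicator_of_mem (Set.mem_Ici.mpr h2)]
            rfl
          rw [hWV]
          exact hdom k hk ω
      have hce : μ[T k - U k | F (k-1)] =ᵐ[μ] B k := by
        refine (condExp_sub (hTint k hk) (hUint k hk) _).trans ?_
        filter_upwards [hmgd k hk] with ω hω
        simp only [Pi.sub_apply, hω, Pi.zero_apply, sub_zero, hBdef]
      have hup : μ[T k - U k | F (k-1)] ≤ᵐ[μ] μ[W | F (k-1)] :=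
        condExp_mono ((hTint k hk).sub (hUint k hk)) hWint
          (Filter.Eventually.of_forall fun ω => (le_abs_self _).trans (habs ω))
      have hdn : μ[U k - T k | F (k-1)] ≤ᵐ[μ] μ[W | F (k-1)] := by
        refine condExp_mono ((hUint k hk).sub (hTint k hk)) hWint
          (Filter.Eventually.of_forall fun ω => ?_)
        have := habs ω
        rw [abs_sub_comm] at this
        exact (le_abs_self _).trans this
      have hneg : μ[U k - T k | F (k-1)] =ᵐ[μ] -μ[T k - U k | F (k-1)] := by
        rw [show U k - T k = -(T k - U k) by ring]
        exact condExp_neg _ _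
      have hWSM : StronglyMeasurable[MeasurableSpace.comap (V k) inferInstance] W :=
        ((hgmeas k).comp (Measurable.of_comap_le le_rfl)).stronglyMeasurable
      have hWc : μ[W | F (k-1)] =ᵐ[μ] fun _ => ∫ ω, W ω ∂μ :=
        condExp_indep_eq ((hVmeas k hk).comap_le) (F.le _) hWSM (hVindep k hk)
      have hWc2 : ∫ ω, W ω ∂μ = c k := ((hVident k hk).comp (hgmeas k)).integral_eq
      filter_upwards [hce, hup, hdn, hneg, hWc] with ω h1 h2 h3 h4 h5
      have h5' : (μ[W | F (k-1)]) ω = c k := by rw [h5, ← hWc2]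
      have h4' : (μ[U k - T k | F (k-1)]) ω = -((μ[T k - U k | F (k-1)]) ω) := by
        rw [h4]; rfl
      rw [abs_le]
      constructor
      · rw [← h1]
        rw [h4', h5'] at h3
        linarith
      · rw [← h1]
        rw [h5'] at h2
        exact h2
    have hBall : ∀ᵐ ω ∂μ, ∀ k, 1 ≤ k → |B k ω| ≤ c k := by
      rw [ae_all_iff]
      intro k
      by_cases hk : 1 ≤ k
      · filter_upwards [hBle k hk] with ω h _
        exact h
      · filter_upwards with ω h
        exact absurd h hk
    have hcnonneg : ∀ k, 0 ≤ c k := fun k =>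
      integral_nonneg fun ω => hindnonneg k _ (hV1nonneg ω)
    have hc0 : Tendsto c atTop (𝓝 0) := by
      have := tendsto_integral_filter_of_dominated_convergence (μ := μ)
        (l := (atTop : Filter ℕ))
        (F := fun (k:ℕ) ω => Set.indicator (Set.Ici (k:ℝ)) id (V 1 ω))
        (f := fun _ => (0:ℝ)) (bound := fun ω => |V 1 ω|)
        (Filter.Eventually.of_forall fun k =>
          ((hgmeas k).comp (hVmeas 1 le_rfl)).aestronglyMeasurable)
        (Filter.Eventually.of_forall fun k =>
          (Filter.Eventually.of_forall fun ω => by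
            show ‖(Set.Ici (k:ℝ)).indicator id (V 1 ω)‖ ≤ |V 1 ω|
            rw [Real.norm_eq_abs]
            by_cases h : V 1 ω ∈ Set.Ici (k:ℝ)
            · rw [Set.indicator_of_mem h]; exact le_rfl
            · rw [Set.indicator_of_notMem h]; simp))
        hVint.abs
        (Filter.Eventually.of_forall fun ω => by
          refine Filter.Tendsto.congr' ?_ tendsto_const_nhds
          filter_upwards [(tendsto_natCast_atTop_atTop (R := ℝ)).eventually_gt_atTop
            (V 1 ω)] with k hk
          exact (Set.indicator_of_notMem
            (fun h => absurd (Set.mem_Ici.mp h) (not_le.mpr hk)) _).symm)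
      simpa using this
    filter_upwards [hBall] with ω hω
    refine squeeze_zero_norm (fun n : ℕ => ?_) (avg_Icc_tendsto_zero hc0)
    rw [Real.norm_eq_abs, abs_mul, abs_inv, Nat.abs_cast]
    refine mul_le_mul_of_nonneg_left ?_ (by positivity)
    refine (Finset.abs_sum_le_sum_abs _ _).trans (Finset.sum_le_sum fun k hk => ?_)
    exact hω k (Finset.mem_Icc.mp hk).1
  -- part 3 : Borel-Cantelli, truncation is eventually inactive
  have part3 : ∀ᵐ ω ∂μ,
      Tendsto (fun n : ℕ => (n : ℝ)⁻¹ * ∑ k ∈ Finset.Icc 1 n, (U k ω - T k ω))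
        atTop (𝓝 0) := by
    set s : ℕ → Set Ω := fun j => {ω | (j:ℝ) < V (j+1) ω} with hsdef
    have hident : ∀ j, μ (s j) = μ {ω | V 1 ω ∈ Set.Ioi (j:ℝ)} := by
      intro j
      have := (hVident (j+1) (Nat.le_add_left 1 j)).measure_mem_eq
        (measurableSet_Ioi (a := (j:ℝ)))
      simpa [hsdef, Set.preimage, Set.mem_Ioi] using this
    have htsum : (∑' j, μ (s j)) ≠ ∞ := by
      rw [tsum_congr hident]
      letI : MeasureSpace Ω := ⟨μ⟩
      exact (tsum_prob_mem_Ioi_lt_top hVint hV1nonneg).ne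
    have hae := ae_eventually_notMem htsum
    filter_upwards [hae] with ω hω
    obtain ⟨N, hN⟩ := eventually_atTop.1 hω
    have hzero : ∀ k, N + 1 ≤ k → U k ω - T k ω = 0 := by
      intro k hk
      have h1 : 1 ≤ k := le_trans (Nat.le_add_left 1 N) hk
      have hj := hN (k-1) (by omega)
      have hk1 : k - 1 + 1 = k := Nat.succ_pred_eq_of_pos h1
      rw [hsdef] at hj
      simp only [Set.mem_setOf_eq, hk1, not_lt] at hj
      have hUlt : |U k ω| < (k:ℝ) := by
        have hlt : ((k-1:ℕ):ℝ) < (k:ℝ) := by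
          exact_mod_cast Nat.sub_lt h1 one_pos
        exact lt_of_le_of_lt ((hdom k h1 ω).trans hj) hlt
      have : T k ω = U k ω := truncation_eq_self hUlt
      rw [this, sub_self]
    have hconst : ∀ᶠ n in atTop,
        ∑ k ∈ Finset.Icc 1 n, (U k ω - T k ω) = ∑ k ∈ Finset.Icc 1 N, (U k ω - T k ω) := by
      filter_upwards [eventually_ge_atTop N] with n hn
      refine (Finset.sum_subset (Finset.Icc_subset_Icc_right hn) fun k hk hk' => ?_).symm
      rw [Finset.mem_Icc] at hk hk'
      exact hzero k (by omega)
    have hlim : Tendsto (fun n : ℕ => (n:ℝ)⁻¹ * ∑ k ∈ Finset.Icc 1 N, (U k ω - T k ω))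
        atTop (𝓝 0) := by
      simpa using tendsto_inv_atTop_nhds_zero_nat.mul_const
        (∑ k ∈ Finset.Icc 1 N, (U k ω - T k ω))
    refine hlim.congr' ?_
    filter_upwards [hconst] with n hn
    rw [hn]
  -- combine
  filter_upwards [part1, part2, part3] with ω h1 h2 h3
  have := (h1.add h2).add h3
  simp only [add_zero] at this
  refine this.congr fun n => ?_
  rw [← mul_add, ← mul_add, ← Finset.sum_add_distrib, ← Finset.sum_add_distrib]
  congr 1
  refine Finset.sum_congr rfl fun k _ => ?_
  simp only [hXdef, Pi.sub_apply]
  ring
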